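/- arXiv:1207.0525 — 4 statements merged into one kernel-verified Lean document; each statement's English description precedes it below -/
import Mathlib

section
/- For any n, the generating function identity ∏_{i≥1} (1 + (-x)^i)^{-1} = ∏_{i≥1} (1 + x^{2i-1}) holds as formal power series; consequently, the number of partitions λ of n with n - ℓ(λ) even minus the number with n - ℓ(λ) odd equals the number of strict odd partitions of n. -/
open Finset PowerSeries

noncomputable section AuxForGF

open Finset PowerSeries




theorem weightedGF_prop (n : ℕ) (s : Finset ℕ) (hs : ∀ i ∈ s, 0 < i) (w : ℕ → ℕ → ℚ) :
    ∑ p ∈ Finset.univ.filter (fun p : n.Partition => ∀ j ∈ p.parts, j ∈ s),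
        ∏ i ∈ s, w i (p.parts.count i) =
      coeff n (∏ i ∈ s, PowerSeries.mk fun k => if i ∣ k then w i (k / i) else 0) := by
  rw [coeff_prod]
  simp_rw [coeff_mk, prod_ite_zero, ← Finset.sum_filter]
  set φ : (p : n.Partition) →
      p ∈ Finset.univ.filter (fun p : n.Partition => ∀ j ∈ p.parts, j ∈ s) → (ℕ →₀ ℕ) :=
    fun p _ => {
      toFun := fun i => p.parts.count i * i
      support := Finset.filter (fun i => i ≠ 0) p.parts.toFinset
      mem_support_toFun := fun a => by
        simp only [ne_eq, mul_eq_zero, Multiset.count_eq_zero]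
        rw [not_or, not_not]
        simp only [Multiset.mem_toFinset, not_not, mem_filter] } with hφ
  refine Finset.sum_bij φ ?_ ?_ ?_ ?_
  · intro p hp
    simp only [hφ, mem_filter, mem_finsuppAntidiag, Finsupp.coe_mk, mem_univ, true_and] at hp ⊢
    refine ⟨⟨?_, fun i hi => ?_⟩, fun i _ => Dvd.intro_left _ rfl⟩
    · conv_rhs => rw [← p.parts_sum]
      rw [sum_multiset_count_of_subset _ s]
      · simp only [smul_eq_mul, mul_comm]
      · intro i hi
        simp only [Multiset.mem_toFinset] at hi
        exact hp i hi
    · simp only [ne_eq, Multiset.mem_toFinset, mem_filter] at hi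
      exact hp i hi.1
  · intro p₁ hp₁ p₂ hp₂ h
    apply Nat.Partition.ext
    simp only [mem_univ, mem_filter, true_and] at hp₁ hp₂
    ext i
    simp only [hφ, ne_eq, Multiset.mem_toFinset, not_not, Finsupp.mk.injEq] at h
    by_cases hi : i = 0
    · rw [hi]
      rw [Multiset.count_eq_zero_of_notMem]
      · rw [Multiset.count_eq_zero_of_notMem]
        intro a; exact Nat.lt_irrefl 0 (hs 0 (hp₂ 0 a))
      intro a; exact Nat.lt_irrefl 0 (hs 0 (hp₁ 0 a))
    · rw [← mul_left_inj' hi]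
      rw [funext_iff] at h
      exact h.2 i
  · simp only [hφ, mem_filter, mem_finsuppAntidiag, mem_univ, exists_prop, true_and, and_assoc]
    rintro f ⟨hf₁, hf₂, hf₃⟩
    refine ⟨⟨∑ i ∈ s, Multiset.replicate (f i / i) i, ?_, ?_⟩, ?_, ?_⟩
    · intro i hi
      simp only [Multiset.mem_sum] at hi
      rcases hi with ⟨t, ht, z⟩
      rw [Multiset.eq_of_mem_replicate z]
      exact hs t ht
    · simp_rw [Multiset.sum_sum, Multiset.sum_replicate, Nat.nsmul_eq_mul]
      rw [← hf₁]
      exact sum_congr rfl fun i hi => Nat.div_mul_cancel (hf₃ i hi)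
    · intro i hi
      rw [Multiset.mem_sum] at hi
      rcases hi with ⟨j, hj₁, hj₂⟩
      rwa [Multiset.eq_of_mem_replicate hj₂]
    · ext i
      simp only [Finsupp.coe_mk]
      simp_rw [Multiset.count_sum', Multiset.count_replicate, sum_ite_eq']
      split_ifs with h
      · exact Nat.div_mul_cancel (hf₃ i h)
      · rw [zero_mul]
        exact .symm <| Finsupp.notMem_support_iff.mp fun hi => h (hf₂ hi)
  · intro p hp
    simp only [mem_univ, mem_filter, true_and] at hp
    refine Finset.prod_congr rfl fun i hi => ?_
    simp only [hφ, Finsupp.coe_mk]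
    rw [Nat.mul_div_cancel _ (hs i hi)]
open Finset PowerSeries



theorem inv_one_add_neg_X_pow (i : ℕ) (hi : 0 < i) :
    ((1 : PowerSeries ℚ) + (-X) ^ i)⁻¹ =
      PowerSeries.mk fun k => if i ∣ k then (-1 : ℚ) ^ (k / i * (i + 1)) else 0 := by
  rw [PowerSeries.inv_eq_iff_mul_eq_one (by simp [zero_pow hi.ne'])]
  ext n
  have hX : ((-X : PowerSeries ℚ)) ^ i = C ((-1 : ℚ) ^ i) * X ^ i := by
    rw [neg_pow]; congr 1; simp
  rw [mul_add, mul_one, map_add, hX, mul_comm (C ((-1:ℚ)^i)), ← mul_assoc, mul_comm _ (C _),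
    coeff_C_mul, coeff_mul_X_pow', coeff_mk, coeff_one]
  rcases eq_or_ne n 0 with rfl | hn
  · simp [hi.ne', (by omega : ¬ i ≤ 0)]
  · rw [if_neg hn]
    by_cases hd : i ∣ n
    · obtain ⟨t, rfl⟩ := hd
      have ht : t ≠ 0 := by rintro rfl; simp at hn
      have hle : i ≤ i * t := Nat.le_mul_of_pos_right i (Nat.pos_of_ne_zero ht)
      have h1 : i * t - i = i * (t - 1) := by
        cases t with
        | zero => omega
        | succ t => simp [Nat.mul_succ]
      have h2 : i * (t - 1) / i = t - 1 := Nat.mul_div_cancel_left _ hi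
      have h3 : i * t / i = t := Nat.mul_div_cancel_left _ hi
      rw [if_pos ⟨t, rfl⟩, if_pos hle, h1, coeff_mk, if_pos ⟨t - 1, rfl⟩, h2, h3]
      have h4 : t * (i + 1) = (t - 1) * (i + 1) + (i + 1) := by
        cases t with
        | zero => omega
        | succ t => simp [Nat.succ_sub_one, add_mul]
      rw [h4, pow_add, pow_succ]
      ring
    · rw [if_neg hd]
      split_ifs with h
      · have hnd : ¬ i ∣ (n - i) := by
          rintro ⟨t, ht⟩
          exact hd ⟨t + 1, by rw [Nat.mul_succ]; omega⟩
        rw [coeff_mk, if_neg hnd, mul_zero]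
        norm_num
      · rw [mul_zero]
        norm_num

theorem one_add_X_pow_eq (i : ℕ) (hi : 0 < i) :
    PowerSeries.mk (fun k => if i ∣ k then (if k / i ≤ 1 then (1 : ℚ) else 0) else 0) =
      1 + X ^ i := by
  ext k
  rw [coeff_mk, map_add, coeff_one, coeff_X_pow]
  rcases eq_or_ne k 0 with rfl | hk
  · simp [hi.ne']
    omega
  · rw [if_neg hk, zero_add]
    by_cases hd : i ∣ k
    · obtain ⟨t, rfl⟩ := hd
      have ht : t ≠ 0 := by rintro rfl; simp at hk
      rw [if_pos ⟨t, rfl⟩, Nat.mul_div_cancel_left _ hi]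
      rcases eq_or_ne t 1 with rfl | ht1
      · simp
      · rw [if_neg (by omega : ¬ t ≤ 1),
          if_neg (fun h => ht1 (Nat.eq_of_mul_eq_mul_left hi (by rw [mul_one]; exact h)))]
    · rw [if_neg hd, if_neg]
      rintro rfl
      exact hd (dvd_refl _)

def mkOdd' : ℕ ↪ ℕ := ⟨fun i => 2 * i + 1, fun x y h => by dsimp at h; omega⟩

theorem parts_le {n : ℕ} (p : n.Partition) {j : ℕ} (hj : j ∈ p.parts) : j ≤ n := by
  simpa [p.parts_sum] using Multiset.single_le_sum (fun _ _ => Nat.zero_le _) _ hj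

theorem sum_count_mul {n : ℕ} (p : n.Partition) (s : Finset ℕ) (hsub : p.parts.toFinset ⊆ s) :
    ∑ i ∈ s, p.parts.count i * i = n := by
  conv_rhs => rw [← p.parts_sum]
  rw [Finset.sum_multiset_count_of_subset _ s hsub]
  simp [smul_eq_mul]

theorem sum_count_card {n : ℕ} (p : n.Partition) (s : Finset ℕ) (hsub : p.parts.toFinset ⊆ s) :
    ∑ i ∈ s, p.parts.count i = Multiset.card p.parts := by
  rw [← Multiset.toFinset_sum_count_eq]
  exact (Finset.sum_subset hsub fun i _ hi => by
    simpa [Multiset.count_eq_zero] using fun h => hi (Multiset.mem_toFinset.mpr h)).symm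

theorem signed_sum (n : ℕ) :
    ∑ p : n.Partition, (-1 : ℚ) ^ (n + Multiset.card p.parts) =
      coeff n (∏ a ∈ range (n + 1), ((1 : PowerSeries ℚ) + (-X) ^ (a + 1))⁻¹) := by
  set s : Finset ℕ := (range (n + 1)).map ⟨Nat.succ, Nat.succ_injective⟩ with hs
  have hpos : ∀ i ∈ s, 0 < i := by
    simp only [hs, mem_map, Function.Embedding.coeFn_mk, mem_range]
    rintro i ⟨a, -, rfl⟩; exact Nat.succ_pos a
  have key := weightedGF_prop n s hpos (fun i k => (-1 : ℚ) ^ (k * (i + 1)))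
  have hsub : ∀ p : n.Partition, p.parts.toFinset ⊆ s := by
    intro p i hi
    rw [Multiset.mem_toFinset] at hi
    simp only [hs, mem_map, Function.Embedding.coeFn_mk, mem_range]
    exact ⟨i - 1, by have := parts_le p hi; omega,
      Nat.succ_pred_eq_of_pos (p.parts_pos hi)⟩
  have hfilter : Finset.univ.filter (fun p : n.Partition => ∀ j ∈ p.parts, j ∈ s) = univ := by
    rw [Finset.filter_true_of_mem]
    intro p _ j hj
    exact hsub p (Multiset.mem_toFinset.mpr hj)
  rw [hfilter] at key
  calc ∑ p : n.Partition, (-1 : ℚ) ^ (n + Multiset.card p.parts)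
      = ∑ p : n.Partition, ∏ i ∈ s, (-1 : ℚ) ^ (p.parts.count i * (i + 1)) := by
        refine Finset.sum_congr rfl fun p _ => ?_
        rw [Finset.prod_pow_eq_pow_sum]
        congr 1
        have h1 := sum_count_mul p s (hsub p)
        have h2 := sum_count_card p s (hsub p)
        calc n + Multiset.card p.parts
            = (∑ i ∈ s, p.parts.count i * i) + ∑ i ∈ s, p.parts.count i := by rw [h1, h2]
          _ = ∑ i ∈ s, p.parts.count i * (i + 1) := by
              rw [← Finset.sum_add_distrib]
              exact Finset.sum_congr rfl fun i _ => by ring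
    _ = coeff n (∏ i ∈ s, PowerSeries.mk
          fun k => if i ∣ k then (-1 : ℚ) ^ (k / i * (i + 1)) else 0) := key
    _ = coeff n (∏ a ∈ range (n + 1), ((1 : PowerSeries ℚ) + (-X) ^ (a + 1))⁻¹) := by
        congr 1
        rw [hs, Finset.prod_map]
        refine Finset.prod_congr rfl fun a _ => ?_
        simp only [Function.Embedding.coeFn_mk, Nat.succ_eq_add_one]
        exact (inv_one_add_neg_X_pow _ (Nat.succ_pos a)).symm

theorem strictodd_card (n : ℕ) :
    ((Finset.univ.filter
        (fun p : n.Partition => p.parts.Nodup ∧ ∀ i ∈ p.parts, Odd i)).card : ℚ) =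
      coeff n (∏ a ∈ range (n + 1), ((1 : PowerSeries ℚ) + X ^ (2 * a + 1))) := by
  set s : Finset ℕ := (range (n + 1)).map mkOdd' with hs
  have hpos : ∀ i ∈ s, 0 < i := by
    simp only [hs, mem_map, mkOdd', Function.Embedding.coeFn_mk, DFunLike.coe, mem_range]
    rintro i ⟨a, -, rfl⟩; omega
  have key := weightedGF_prop n s hpos (fun _ k => if k ≤ 1 then (1 : ℚ) else 0)
  have hmem : ∀ (p : n.Partition),
      (∀ j ∈ p.parts, j ∈ s) ∧ (∀ i ∈ s, p.parts.count i ≤ 1) ↔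
      p.parts.Nodup ∧ ∀ i ∈ p.parts, Odd i := by
    intro p
    constructor
    · rintro ⟨h1, h2⟩
      constructor
      · rw [Multiset.nodup_iff_count_le_one]
        intro i
        by_cases hi : i ∈ s
        · exact h2 i hi
        · rw [Multiset.count_eq_zero_of_notMem (fun hmem => hi (h1 i hmem))]
          omega
      · intro i hi
        obtain ⟨a, -, rfl⟩ : ∃ a ∈ range (n+1), mkOdd' a = i := by
          simpa [hs, mem_map] using h1 i hi
        exact ⟨a, rfl⟩
    · rintro ⟨h1, h2⟩
      have h3 : ∀ j ∈ p.parts, j ∈ s := by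
        intro j hj
        obtain ⟨a, ha⟩ := h2 j hj
        have hjn := parts_le p hj
        simp only [hs, mem_map, mkOdd', Function.Embedding.coeFn_mk, DFunLike.coe, mem_range]
        exact ⟨a, by omega, by omega⟩
      refine ⟨h3, fun i _ => ?_⟩
      exact Multiset.nodup_iff_count_le_one.mp h1 i
  calc ((Finset.univ.filter
        (fun p : n.Partition => p.parts.Nodup ∧ ∀ i ∈ p.parts, Odd i)).card : ℚ)
      = ∑ p ∈ Finset.univ.filter (fun p : n.Partition => ∀ j ∈ p.parts, j ∈ s),
          ∏ i ∈ s, (if p.parts.count i ≤ 1 then (1 : ℚ) else 0) := by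
        rw [Finset.filter_congr (fun p _ => (hmem p).symm), ← Finset.filter_filter,
          ← Finset.sum_boole]
        simp_rw [prod_ite_zero, Finset.prod_const_one]
    _ = coeff n (∏ i ∈ s, PowerSeries.mk
          fun k => if i ∣ k then (if k / i ≤ 1 then (1:ℚ) else 0) else 0) := key
    _ = coeff n (∏ a ∈ range (n + 1), ((1 : PowerSeries ℚ) + X ^ (2 * a + 1))) := by
        congr 1
        rw [hs, Finset.prod_map]
        refine Finset.prod_congr rfl fun a _ => ?_
        simp only [mkOdd', Function.Embedding.coeFn_mk, DFunLike.coe]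
        exact one_add_X_pow_eq _ (by omega)

lemma card_le_sum_parts (s : Multiset ℕ) (h : ∀ x ∈ s, 0 < x) : Multiset.card s ≤ s.sum := by
  calc Multiset.card s = (s.map (fun _ => 1)).sum := by simp
  _ ≤ (s.map id).sum := Multiset.sum_map_le_sum_map _ _ (fun x hx => h x hx)
  _ = s.sum := by simp



theorem same_gf_gen (Y : PowerSeries ℚ) (hY : constantCoeff Y = 0) (m : ℕ) :
    ((∏ i ∈ range m, (1 - Y ^ (2 * i + 1))⁻¹) * ∏ i ∈ range m, (1 - Y ^ (m + i + 1))) =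
      ∏ i ∈ range m, (1 + Y ^ (i + 1)) := by
  induction' m with m ih
  · simp
  set! π₀ : PowerSeries ℚ := ∏ i ∈ range m, (1 - Y ^ (m + 1 + i + 1)) with hπ₀
  set! π₁ : PowerSeries ℚ := ∏ i ∈ range m, (1 - Y ^ (2 * i + 1))⁻¹ with hπ₁
  set! π₂ : PowerSeries ℚ := ∏ i ∈ range m, (1 - Y ^ (m + i + 1)) with hπ₂
  set! π₃ : PowerSeries ℚ := ∏ i ∈ range m, (1 + Y ^ (i + 1)) with hπ₃
  rw [← hπ₃] at ih
  have h : constantCoeff (1 - Y ^ (2 * m + 1)) ≠ 0 := by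
    rw [RingHom.map_sub, RingHom.map_pow, constantCoeff_one, hY,
      zero_pow (2 * m).succ_ne_zero, sub_zero]
    exact one_ne_zero
  calc
    (∏ i ∈ range (m + 1), (1 - Y ^ (2 * i + 1))⁻¹) *
          ∏ i ∈ range (m + 1), (1 - Y ^ (m + 1 + i + 1)) =
        π₁ * (1 - Y ^ (2 * m + 1))⁻¹ * (π₀ * (1 - Y ^ (m + 1 + m + 1))) := by
      rw [prod_range_succ _ m, ← hπ₁, prod_range_succ _ m, ← hπ₀]
    _ = π₁ * (1 - Y ^ (2 * m + 1))⁻¹ * (π₀ * ((1 + Y ^ (m + 1)) * (1 - Y ^ (m + 1)))) := by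
      rw [← sq_sub_sq, one_pow, add_assoc _ m 1, ← two_mul (m + 1), pow_mul']
    _ = π₀ * (1 - Y ^ (m + 1)) * (1 - Y ^ (2 * m + 1))⁻¹ * (π₁ * (1 + Y ^ (m + 1))) := by ring
    _ = (∏ i ∈ range (m + 1), (1 - Y ^ (m + 1 + i))) * (1 - Y ^ (2 * m + 1))⁻¹ *
          (π₁ * (1 + Y ^ (m + 1))) := by
      rw [prod_range_succ', add_zero, hπ₀]; simp_rw [← add_assoc]
    _ = π₂ * (1 - Y ^ (m + 1 + m)) * (1 - Y ^ (2 * m + 1))⁻¹ * (π₁ * (1 + Y ^ (m + 1))) := by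
      rw [add_right_comm, hπ₂, ← prod_range_succ]; simp_rw [add_right_comm]
    _ = π₂ * (1 - Y ^ (2 * m + 1)) * (1 - Y ^ (2 * m + 1))⁻¹ * (π₁ * (1 + Y ^ (m + 1))) := by
      rw [two_mul, add_right_comm _ m 1]
    _ = (1 - Y ^ (2 * m + 1)) * (1 - Y ^ (2 * m + 1))⁻¹ * π₂ * (π₁ * (1 + Y ^ (m + 1))) := by ring
    _ = π₂ * (π₁ * (1 + Y ^ (m + 1))) := by rw [PowerSeries.mul_inv_cancel _ h, one_mul]
    _ = π₁ * π₂ * (1 + Y ^ (m + 1)) := by ring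
    _ = π₃ * (1 + Y ^ (m + 1)) := by rw [ih]
    _ = _ := by rw [prod_range_succ]

theorem lt_order_neg_X_pow (N k : ℕ) (h : N < k) :
    (N : ℕ∞) < ((-X : PowerSeries ℚ) ^ k).order := by
  refine lt_of_lt_of_le ?_ (PowerSeries.le_order _ (k : ℕ∞) ?_)
  · exact_mod_cast h
  · intro j hj
    have hj' : j ≠ k := ne_of_lt (by exact_mod_cast hj)
    rcases Nat.even_or_odd k with he | ho
    · rw [he.neg_pow]; simp [coeff_X_pow, hj']
    · rw [ho.neg_pow, map_neg]; simp [coeff_X_pow, hj']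

theorem part1 (N : ℕ) :
    PowerSeries.coeff N (∏ i ∈ Finset.range (N + 1),
        ((1 : PowerSeries ℚ) + (-PowerSeries.X) ^ (i + 1))⁻¹) =
    PowerSeries.coeff N (∏ i ∈ Finset.range (N + 1),
        ((1 : PowerSeries ℚ) + PowerSeries.X ^ (2 * i + 1))) := by
  set A : PowerSeries ℚ := ∏ i ∈ range (N + 1), (1 + (-X) ^ (i + 1)) with hA
  set B : PowerSeries ℚ := ∏ i ∈ range (N + 1), (1 + X ^ (2 * i + 1)) with hB
  set L : PowerSeries ℚ := ∏ i ∈ range (N + 1), (1 + (-X : PowerSeries ℚ) ^ (i + 1))⁻¹ with hL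
  set E : PowerSeries ℚ := ∏ i ∈ range (N + 1), (1 - (-X : PowerSeries ℚ) ^ (N + 1 + i + 1))
    with hE
  have key : (∏ i ∈ range (N + 1), ((1 : PowerSeries ℚ) + X ^ (2 * i + 1))⁻¹) * E = A := by
    have := same_gf_gen (-X) (by simp) (N + 1)
    convert this using 3 with i hi
    rw [Odd.neg_pow ⟨i, by ring⟩, sub_neg_eq_add]
  have hBinv : B * (∏ i ∈ range (N + 1), ((1 : PowerSeries ℚ) + X ^ (2 * i + 1))⁻¹) = 1 := by
    rw [hB, ← prod_mul_distrib]
    rw [Finset.prod_eq_one]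
    intro i hi
    exact PowerSeries.mul_inv_cancel _ (by simp)
  have hLA : L * A = 1 := by
    rw [hL, hA, ← prod_mul_distrib]
    rw [Finset.prod_eq_one]
    intro i hi
    refine PowerSeries.inv_mul_cancel _ ?_
    simp [zero_pow]
  have hEBA : E = B * A := by
    calc E = B * ((∏ i ∈ range (N + 1), ((1 : PowerSeries ℚ) + X ^ (2 * i + 1))⁻¹) * E) := by
            rw [← mul_assoc, hBinv, one_mul]
      _ = B * A := by rw [key]
  have hLE : L * E = B := by
    rw [hEBA]; calc L * (B * A) = B * (L * A) := by ring
      _ = B := by rw [hLA, mul_one]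
  calc coeff N L = coeff N (L * E) := by
        rw [hE]
        rw [coeff_mul_prod_one_sub_of_lt_order]
        intro i hi
        exact lt_order_neg_X_pow N _ (by omega)
    _ = coeff N B := by rw [hLE]


end AuxForGF

/-- The generating function identity `∏_{i≥1} (1 + (-x)^i)⁻¹ = ∏_{i≥1} (1 + x^{2i-1})`
(stated coefficientwise with suitably truncated products), and its combinatorial
consequence: for every `n`, the number of partitions `λ` of `n` with `n - ℓ(λ)` even minus
the number with `n - ℓ(λ)` odd equals the number of strict odd partitions of `n`. -/
theorem gf_identity_and_strict_odd_count :
    (∀ N : ℕ,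
      PowerSeries.coeff N (∏ i ∈ Finset.range (N + 1),
          ((1 : PowerSeries ℚ) + (-PowerSeries.X) ^ (i + 1))⁻¹) =
      PowerSeries.coeff N (∏ i ∈ Finset.range (N + 1),
          ((1 : PowerSeries ℚ) + PowerSeries.X ^ (2 * i + 1)))) ∧
    (∀ n : ℕ,
      ((Finset.univ.filter
          (fun p : n.Partition => Even (n - Multiset.card p.parts))).card : ℤ) -
      ((Finset.univ.filter
          (fun p : n.Partition => Odd (n - Multiset.card p.parts))).card : ℤ) =
      ((Finset.univ.filter
          (fun p : n.Partition => p.parts.Nodup ∧ ∀ i ∈ p.parts, Odd i)).card : ℤ)) := by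
  refine ⟨part1, fun n => ?_⟩
  have hcard : ∀ p : n.Partition, Multiset.card p.parts ≤ n := fun p => by
    have h := card_le_sum_parts p.parts (fun x hx => p.parts_pos hx)
    rwa [p.parts_sum] at h
  have hsign : ∀ p : n.Partition, (-1 : ℚ) ^ (n + Multiset.card p.parts) =
      if Even (n - Multiset.card p.parts) then (1 : ℚ) else -1 := by
    intro p
    have h1 : Even (n + Multiset.card p.parts) ↔ Even (n - Multiset.card p.parts) := by
      rw [Nat.even_add, Nat.even_sub (hcard p)]
    by_cases h : Even (n - Multiset.card p.parts)
    · rw [if_pos h, Even.neg_one_pow (h1.mpr h)]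
    · rw [if_neg h, Odd.neg_one_pow (Nat.not_even_iff_odd.mp fun he => h (h1.mp he))]
  have hQ : ((Finset.univ.filter
        (fun p : n.Partition => Even (n - Multiset.card p.parts))).card : ℚ) -
      ((Finset.univ.filter
        (fun p : n.Partition => Odd (n - Multiset.card p.parts))).card : ℚ) =
      ((Finset.univ.filter
        (fun p : n.Partition => p.parts.Nodup ∧ ∀ i ∈ p.parts, Odd i)).card : ℚ) := by
    have hsplit : ∑ p : n.Partition, (-1 : ℚ) ^ (n + Multiset.card p.parts) =
        ((Finset.univ.filter
          (fun p : n.Partition => Even (n - Multiset.card p.parts))).card : ℚ) -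
        ((Finset.univ.filter
          (fun p : n.Partition => Odd (n - Multiset.card p.parts))).card : ℚ) := by
      simp_rw [hsign]
      rw [Finset.sum_ite, Finset.sum_const, Finset.sum_const]
      have hodd : Finset.univ.filter (fun p : n.Partition =>
          ¬ Even (n - Multiset.card p.parts)) =
          Finset.univ.filter (fun p : n.Partition => Odd (n - Multiset.card p.parts)) :=
        Finset.filter_congr fun p _ => Nat.not_even_iff_odd
      rw [hodd]
      simp [nsmul_eq_mul, mul_comm, sub_eq_add_neg]
    rw [← hsplit, signed_sum n, part1 n, ← strictodd_card n]
  have h1 := hQ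
  exact_mod_cast h1
end

section
/- The number of strict odd partitions of n equals the number of self-conjugate partitions of n. -/
namespace SOSC

open List Finset

/-- Membership predicate for the hook diagram of a list of arm lengths. -/
def P (L : List ℕ) (c : ℕ × ℕ) : Prop :=
  min c.1 c.2 < L.length ∧ max c.1 c.2 ≤ min c.1 c.2 + L.getD (min c.1 c.2) 0

instance (L : List ℕ) (c : ℕ × ℕ) : Decidable (P L c) := instDecidableAnd

lemma key (L : List ℕ) (hL : L.Chain' (· > ·)) {k k' : ℕ} (h : k ≤ k') (h' : k' < L.length) :
    k' + L.getD k' 0 ≤ k + L.getD k 0 := by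
  induction k', h using Nat.le_induction with
  | base => rfl
  | succ m hm ih =>
    have hm' : m < L.length := by omega
    have hstep : L.getD (m+1) 0 < L.getD m 0 := by
      rw [List.getD_eq_getElem L 0 h', List.getD_eq_getElem L 0 hm']
      have := List.isChain_iff_getElem.mp hL m (by omega)
      simpa using this
    have := ih hm'
    omega

lemma getD_le_sum (L : List ℕ) {k : ℕ} (h : k < L.length) : L.getD k 0 ≤ L.sum := by
  rw [List.getD_eq_getElem L 0 h]
  exact List.single_le_sum (fun _ _ => Nat.zero_le _) _ (List.getElem_mem h)

lemma P_bound {L : List ℕ} {c : ℕ × ℕ} (h : P L c) :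
    c.1 < L.length + L.sum ∧ c.2 < L.length + L.sum := by
  obtain ⟨h1, h2⟩ := h
  have := getD_le_sum L h1
  omega

/-- The self-conjugate Young diagram whose diagonal hooks have arm lengths given by `L`. -/
def yd (L : List ℕ) (hL : L.Chain' (· > ·)) : YoungDiagram where
  cells := (Finset.range (L.length + L.sum) ×ˢ Finset.range (L.length + L.sum)).filter (P L)
  isLowerSet := by
    intro a b hba ha
    simp only [Finset.coe_filter, Set.mem_setOf_eq, Finset.mem_product, Finset.mem_range] at ha ⊢
    obtain ⟨hb1, hb2⟩ := hba
    obtain ⟨-, hp1, hp2⟩ := ha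
    have hminb : min b.1 b.2 ≤ min a.1 a.2 := by omega
    have hmaxb : max b.1 b.2 ≤ max a.1 a.2 := by omega
    have hk := key L hL hminb hp1
    have hPb : P L b := ⟨by omega, by omega⟩
    exact ⟨⟨(P_bound hPb).1, (P_bound hPb).2⟩, hPb⟩

lemma mem_yd {L : List ℕ} {hL : L.Chain' (· > ·)} {c : ℕ × ℕ} :
    c ∈ yd L hL ↔ P L c := by
  show c ∈ Finset.filter _ _ ↔ _
  simp only [Finset.mem_filter, Finset.mem_product, Finset.mem_range]
  exact ⟨fun h => h.2, fun h => ⟨⟨(P_bound h).1, (P_bound h).2⟩, h⟩⟩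

lemma mem_yd' {L : List ℕ} {hL : L.Chain' (· > ·)} {i j : ℕ} :
    (i, j) ∈ yd L hL ↔ min i j < L.length ∧ max i j ≤ min i j + L.getD (min i j) 0 :=
  mem_yd

lemma yd_congr {L L' : List ℕ} {hL : L.Chain' (· > ·)} {hL' : L'.Chain' (· > ·)}
    (h : L = L') : yd L hL = yd L' hL' := by subst h; rfl

lemma transpose_yd (L : List ℕ) (hL : L.Chain' (· > ·)) : (yd L hL).transpose = yd L hL := by
  ext c
  rw [YoungDiagram.mem_cells, YoungDiagram.mem_cells, YoungDiagram.mem_transpose, mem_yd, mem_yd]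
  unfold P
  rw [Prod.fst_swap, Prod.snd_swap, min_comm, max_comm]

/-- The `k`-th diagonal hook. -/
def hook (L : List ℕ) (k : ℕ) : Finset (ℕ × ℕ) :=
  ({k} ×ˢ Finset.Icc k (k + L.getD k 0)) ∪ (Finset.Icc (k+1) (k + L.getD k 0) ×ˢ {k})

lemma mem_hook {L : List ℕ} {k : ℕ} {c : ℕ × ℕ} :
    c ∈ hook L k ↔ (c.1 = k ∧ k ≤ c.2 ∧ c.2 ≤ k + L.getD k 0) ∨
      (c.2 = k ∧ k + 1 ≤ c.1 ∧ c.1 ≤ k + L.getD k 0) := by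
  obtain ⟨x, y⟩ := c
  simp only [hook, Finset.mem_union, Finset.mem_product, Finset.mem_singleton, Finset.mem_Icc]
  tauto

lemma min_eq_of_mem_hook {L : List ℕ} {k : ℕ} {c : ℕ × ℕ} (h : c ∈ hook L k) :
    min c.1 c.2 = k := by
  rw [mem_hook] at h; omega

lemma card_hook (L : List ℕ) (k : ℕ) : (hook L k).card = 2 * L.getD k 0 + 1 := by
  rw [hook, Finset.card_union_of_disjoint, Finset.card_product, Finset.card_product]
  · simp [Nat.card_Icc]
    omega
  · rw [Finset.disjoint_left]
    rintro ⟨a, b⟩ h1 h2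
    simp only [Finset.mem_product, Finset.mem_singleton, Finset.mem_Icc] at h1 h2
    omega

lemma cells_yd (L : List ℕ) (hL : L.Chain' (· > ·)) :
    (yd L hL).cells = (Finset.range L.length).biUnion (hook L) := by
  ext c
  rw [YoungDiagram.mem_cells, mem_yd, Finset.mem_biUnion]
  constructor
  · rintro ⟨h1, h2⟩
    refine ⟨min c.1 c.2, Finset.mem_range.mpr h1, ?_⟩
    rw [mem_hook]
    omega
  · rintro ⟨k, hk, hc⟩
    rw [Finset.mem_range] at hk
    rw [mem_hook] at hc
    have hmin : min c.1 c.2 = k := by omega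
    refine ⟨by omega, ?_⟩
    rw [hmin]
    omega

lemma sum_getD (L : List ℕ) :
    ∑ k ∈ Finset.range L.length, (2 * L.getD k 0 + 1) = (L.map (fun m => 2 * m + 1)).sum := by
  induction L with
  | nil => simp
  | cons a l ih =>
    rw [List.length_cons, Finset.sum_range_succ']
    simp only [List.getD_cons_succ, List.getD_cons_zero, List.map_cons, List.sum_cons]
    rw [ih, Nat.add_comm]

lemma card_yd (L : List ℕ) (hL : L.Chain' (· > ·)) :
    (yd L hL).card = (L.map (fun m => 2 * m + 1)).sum := by
  show (yd L hL).cells.card = _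
  rw [cells_yd, Finset.card_biUnion]
  · rw [Finset.sum_congr rfl (fun k _ => card_hook L k)]
    exact sum_getD L
  · intro x _ y _ hxy
    rw [Function.onFun, Finset.disjoint_left]
    intro c hcx hcy
    exact hxy ((min_eq_of_mem_hook hcx).symm.trans (min_eq_of_mem_hook hcy))

/-! ### From diagram to list -/

lemma exists_diag_not_mem (Y : YoungDiagram) : ∃ i, (i, i) ∉ Y := by
  refine ⟨Y.colLen 0, fun h => ?_⟩
  have h0 : (Y.colLen 0, 0) ∈ Y := Y.up_left_mem le_rfl (Nat.zero_le _) h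
  have := YoungDiagram.mem_iff_lt_colLen.mp h0
  omega

/-- Number of diagonal cells. -/
def diagLen (Y : YoungDiagram) : ℕ := Nat.find (exists_diag_not_mem Y)

lemma mem_diag_iff {Y : YoungDiagram} {k : ℕ} : (k, k) ∈ Y ↔ k < diagLen Y := by
  rw [diagLen, Nat.lt_find_iff]
  push_neg
  constructor
  · intro h m hm
    exact Y.up_left_mem hm hm h
  · intro h
    exact h k le_rfl

/-- List of arm lengths of the diagonal hooks. -/
def toL (Y : YoungDiagram) : List ℕ :=
  (List.range (diagLen Y)).map (fun k => Y.rowLen k - (k + 1))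

@[simp] lemma length_toL (Y : YoungDiagram) : (toL Y).length = diagLen Y := by simp [toL]

lemma rowLen_lower {Y : YoungDiagram} {k : ℕ} (h : k < diagLen Y) : k + 1 ≤ Y.rowLen k := by
  rw [← mem_diag_iff] at h
  exact YoungDiagram.mem_iff_lt_rowLen.mp h

lemma getD_toL {Y : YoungDiagram} {k : ℕ} (h : k < diagLen Y) :
    (toL Y).getD k 0 = Y.rowLen k - (k + 1) := by
  rw [List.getD_eq_getElem _ 0 (by simpa using h)]
  simp [toL]

lemma chain'_toL (Y : YoungDiagram) : (toL Y).Chain' (· > ·) := by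
  show (toL Y).IsChain _
  rw [List.isChain_iff_getElem]
  intro i h
  simp only [toL, List.length_map, List.length_range] at h
  have hi1 : i + 1 < diagLen Y := by omega
  have h1 := rowLen_lower hi1
  have h2 := Y.rowLen_anti i (i + 1) (by omega)
  simp only [toL, List.get_eq_getElem, List.getElem_map, List.getElem_range]
  omega

lemma mem_self_conj {Y : YoungDiagram} (hY : Y.transpose = Y) (i j : ℕ) :
    (i, j) ∈ Y ↔ max i j < Y.rowLen (min i j) := by
  rcases le_total i j with h | h
  · rw [max_eq_right h, min_eq_left h, YoungDiagram.mem_iff_lt_rowLen]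
  · have hswap : (i, j) ∈ Y ↔ (j, i) ∈ Y := by
      conv_lhs => rw [← hY]
      rw [YoungDiagram.mem_transpose]
      rfl
    rw [hswap, max_eq_left h, min_eq_right h, YoungDiagram.mem_iff_lt_rowLen]

lemma yd_toL {Y : YoungDiagram} (hY : Y.transpose = Y) : yd (toL Y) (chain'_toL Y) = Y := by
  ext ⟨i, j⟩
  rw [YoungDiagram.mem_cells, YoungDiagram.mem_cells, mem_yd, mem_self_conj hY]
  unfold P
  simp only [length_toL]
  constructor
  · rintro ⟨h1, h2⟩
    rw [getD_toL h1] at h2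
    have := rowLen_lower h1
    omega
  · intro h
    have hd : min i j < diagLen Y := by
      rw [← mem_diag_iff]
      rw [YoungDiagram.mem_iff_lt_rowLen]
      omega
    have := rowLen_lower hd
    rw [getD_toL hd]
    exact ⟨hd, by omega⟩

lemma diag_mem_yd {L : List ℕ} {hL : L.Chain' (· > ·)} {k : ℕ} :
    (k, k) ∈ yd L hL ↔ k < L.length := by
  rw [mem_yd]
  unfold P
  simp

lemma diagLen_yd (L : List ℕ) (hL : L.Chain' (· > ·)) : diagLen (yd L hL) = L.length := by
  have h1 : ∀ k, ((k, k) ∈ yd L hL ↔ k < L.length) := fun k => diag_mem_yd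
  have h2 := (h1 (diagLen (yd L hL))).symm.trans mem_diag_iff
  have h3 := (h1 L.length).symm.trans mem_diag_iff
  omega

lemma rowLen_yd (L : List ℕ) (hL : L.Chain' (· > ·)) {k : ℕ} (h : k < L.length) :
    (yd L hL).rowLen k = k + L.getD k 0 + 1 := by
  have hmem : (k, k + L.getD k 0) ∈ yd L hL := by
    rw [mem_yd']
    rw [min_eq_left (by omega), max_eq_right (by omega)]
    exact ⟨h, le_rfl⟩
  have hnot : (k, k + L.getD k 0 + 1) ∉ yd L hL := by
    rw [mem_yd']
    rw [min_eq_left (by omega), max_eq_right (by omega)]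
    omega
  rw [YoungDiagram.mem_iff_lt_rowLen] at hmem
  rw [YoungDiagram.mem_iff_lt_rowLen] at hnot
  omega

lemma toL_yd (L : List ℕ) (hL : L.Chain' (· > ·)) : toL (yd L hL) = L := by
  apply List.ext_getElem
  · simp [toL, diagLen_yd]
  · intro k h1 h2
    simp only [toL, List.getElem_map, List.getElem_range]
    rw [rowLen_yd L hL h2, List.getD_eq_getElem L 0 h2]
    omega

/-- Total version of `yd`. -/
def ydF (L : List ℕ) : YoungDiagram := if h : L.IsChain (· > ·) then yd L h else ⊥

lemma ydF_eq {L : List ℕ} (h : L.Chain' (· > ·)) : ydF L = yd L h := dif_pos h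

end SOSC

open SOSC in
/-- The number of strict odd partitions of `n` (all parts odd and distinct) equals the
number of self-conjugate partitions of `n` (realized as Young diagrams with `n` cells
fixed by transposition). -/
theorem card_strict_odd_eq_card_self_conjugate (n : ℕ) :
    Nat.card {p : n.Partition // p.parts.Nodup ∧ ∀ i ∈ p.parts, Odd i} =
    Nat.card {Y : YoungDiagram // Y.card = n ∧ Y.transpose = Y} := by
  apply Nat.card_congr
  -- preliminary facts packaged as local lemmas
  have pairwise_gt : ∀ (p : n.Partition), p.parts.Nodup →
      (p.parts.sort (· ≥ ·)).Pairwise (· > ·) := by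
    intro p hnd
    have hs : (p.parts.sort (· ≥ ·)).Pairwise (· ≥ ·) := p.parts.pairwise_sort _
    have hn : (p.parts.sort (· ≥ ·)).Nodup := by
      rw [← Multiset.coe_nodup, Multiset.sort_eq]; exact hnd
    exact (hs.and hn).imp (fun h => lt_of_le_of_ne h.1 (Ne.symm h.2))
  have chainL : ∀ (p : n.Partition), p.parts.Nodup → (∀ i ∈ p.parts, Odd i) →
      ((p.parts.sort (· ≥ ·)).map (· / 2)).Chain' (· > ·) := by
    intro p hnd hodd
    apply List.Pairwise.isChain
    rw [List.pairwise_map]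
    refine (pairwise_gt p hnd).imp_of_mem ?_
    intro a b ha hb hab
    rw [Multiset.mem_sort] at ha hb
    obtain ⟨x, rfl⟩ := hodd a ha
    obtain ⟨y, rfl⟩ := hodd b hb
    omega
  refine
    { toFun := fun ⟨p, hnd, hodd⟩ =>
        ⟨ydF ((p.parts.sort (· ≥ ·)).map (· / 2)), ?_, ?_⟩
      invFun := fun ⟨Y, hcard, hconj⟩ =>
        ⟨⟨((toL Y).map (fun m => 2 * m + 1) : List ℕ), ?_, ?_⟩, ?_, ?_⟩
      left_inv := ?_
      right_inv := ?_ }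
  · -- card = n
    rw [ydF_eq (chainL p hnd hodd), card_yd, List.map_map]
    have : ∀ a ∈ p.parts.sort (· ≥ ·), ((fun m => 2 * m + 1) ∘ (· / 2)) a = id a := by
      intro a ha
      rw [Multiset.mem_sort] at ha
      obtain ⟨x, rfl⟩ := hodd a ha
      simp; omega
    rw [List.map_congr_left this, List.map_id]
    rw [← Multiset.sum_coe, Multiset.sort_eq]
    exact p.parts_sum
  · rw [ydF_eq (chainL p hnd hodd)]
    exact transpose_yd _ _
  · -- parts_pos
    intro i hi
    rw [Multiset.mem_coe, List.mem_map] at hi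
    obtain ⟨m, _, rfl⟩ := hi
    omega
  · -- parts_sum
    rw [Multiset.sum_coe]
    have h1 := card_yd (toL Y) (chain'_toL Y)
    rw [yd_toL hconj] at h1
    rw [← h1, hcard]
  · -- nodup
    rw [Multiset.coe_nodup]
    apply List.Nodup.map (fun a b h => by omega)
    exact (List.isChain_iff_pairwise.mp (chain'_toL Y)).imp ne_of_gt
  · -- odd
    intro i hi
    rw [Multiset.mem_coe, List.mem_map] at hi
    obtain ⟨m, _, rfl⟩ := hi
    exact ⟨m, by ring⟩
  · -- left_inv
    rintro ⟨p, hnd, hodd⟩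
    apply Subtype.ext
    apply Nat.Partition.ext
    show ((toL (ydF _)).map (fun m => 2 * m + 1) : Multiset ℕ) = p.parts
    rw [ydF_eq (chainL p hnd hodd), toL_yd, List.map_map]
    have : ∀ a ∈ p.parts.sort (· ≥ ·), ((fun m => 2 * m + 1) ∘ (· / 2)) a = id a := by
      intro a ha
      rw [Multiset.mem_sort] at ha
      obtain ⟨x, rfl⟩ := hodd a ha
      simp; omega
    rw [List.map_congr_left this, List.map_id, Multiset.sort_eq]
  · -- right_inv
    rintro ⟨Y, hcard, hconj⟩
    apply Subtype.ext
    show ydF _ = Y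
    have hsorted : ((toL Y).map (fun m => 2 * m + 1)).Pairwise (· ≥ ·) := by
      rw [List.pairwise_map]
      exact (List.isChain_iff_pairwise.mp (chain'_toL Y)).imp (fun h => by omega)
    have hsort_eq : (((toL Y).map (fun m => 2 * m + 1) : Multiset ℕ)).sort (· ≥ ·)
        = (toL Y).map (fun m => 2 * m + 1) := by
      apply List.Perm.eq_of_pairwise' (Multiset.pairwise_sort _ _) hsorted
      rw [← Multiset.coe_eq_coe, Multiset.sort_eq]
    have hlist : ((((toL Y).map (fun m => 2 * m + 1) : Multiset ℕ)).sort (· ≥ ·)).map (· / 2)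
        = toL Y := by
      rw [hsort_eq, List.map_map]
      have : ∀ a ∈ toL Y, ((· / 2) ∘ (fun m => 2 * m + 1)) a = id a := by
        intro a _; simp; omega
      rw [List.map_congr_left this, List.map_id]
    rw [hlist, ydF_eq (chain'_toL Y)]
    exact yd_toL hconj
end

section
/- For a partition λ of odd n, define Q(λ,t) = [t^{2n(λ)} ∏_{□∈λ}(1+t^{2c_□+1})/(1-t^{2h_□}) + t^{2n(λ)} ∏_{□∈λ}(t^{2c_□}+t)/(1-t^{2h_□})] · ∏_{i=1}^{n-1}(1-t^{2i}) · (1-t^n). Then Q(λ,t) = t^{n(n-1)} Q(λ, 1/t). -/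
/-- The hook length of the cell `c = (i, j)` of a Young diagram. -/
def YoungDiagram.hookLen (Y : YoungDiagram) (c : ℕ × ℕ) : ℕ :=
  (Y.rowLen c.1 - c.2) + (Y.colLen c.2 - c.1) - 1

/-- The statistic `n(λ) = ∑_{i ≥ 1} (i-1) λ_i`: the sum over all cells of the
(0-indexed) row index. -/
def YoungDiagram.nStat (Y : YoungDiagram) : ℕ := ∑ c ∈ Y.cells, c.1

/-- `Q(λ,t) = [t^{2n(λ)} ∏_{□∈λ}(1+t^{2c_□+1})/(1-t^{2h_□})
  + t^{2n(λ)} ∏_{□∈λ}(t^{2c_□}+t)/(1-t^{2h_□})] · ∏_{i=1}^{n-1}(1-t^{2i}) · (1-t^n)`. -/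
noncomputable def spinFakeDegD (K : Type*) [Field K] (Y : YoungDiagram) (n : ℕ) (t : K) : K :=
  (t ^ (2 * Y.nStat) *
      ∏ c ∈ Y.cells,
        (1 + t ^ (2 * ((c.2 : ℤ) - (c.1 : ℤ)) + 1)) / (1 - t ^ (2 * Y.hookLen c)) +
    t ^ (2 * Y.nStat) *
      ∏ c ∈ Y.cells,
        (t ^ (2 * ((c.2 : ℤ) - (c.1 : ℤ))) + t) / (1 - t ^ (2 * Y.hookLen c))) *
    (∏ i ∈ Finset.range (n - 1), (1 - t ^ (2 * (i + 1)))) * (1 - t ^ n)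

section Helpers
variable {K : Type*} [Field K] {t : K}

private lemma zpow_sum'' (ht : t ≠ 0) {α : Type*} (s : Finset α)
    (f : α → ℤ) : t ^ (∑ a ∈ s, f a) = ∏ a ∈ s, t ^ f a := by
  induction s using Finset.cons_induction with
  | empty => simp
  | cons a s ha ih => rw [Finset.sum_cons, Finset.prod_cons, zpow_add₀ ht, ih]

private lemma one_sub_inv_pow (ht : t ≠ 0) (m : ℕ) :
    (1:K) - t⁻¹ ^ m = -(t ^ m)⁻¹ * (1 - t ^ m) := by
  have hm : t ^ m ≠ 0 := pow_ne_zero _ ht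
  rw [inv_pow]; field_simp; ring

private lemma frac_flip (ht : t ≠ 0) (a b : K) (e : ℤ) (m : ℕ)
    (hab : a = t ^ e * b) :
    a / (1 - t⁻¹ ^ m) = -(t ^ (e + m)) * (b / (1 - t ^ m)) := by
  have hm : t ^ m ≠ 0 := pow_ne_zero _ ht
  rw [hab, one_sub_inv_pow ht, zpow_add₀ ht, zpow_natCast,
    div_mul_eq_div_div_swap, div_neg, div_eq_mul_inv, inv_inv]
  ring

private lemma numA_flip (ht : t ≠ 0) (E : ℤ) :
    (1:K) + t⁻¹ ^ E = t ^ (-E) * (1 + t ^ E) := by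
  rw [inv_zpow', mul_add, mul_one, ← zpow_add₀ ht, neg_add_cancel, zpow_zero, add_comm]

private lemma numB_flip (ht : t ≠ 0) (E : ℤ) :
    t⁻¹ ^ E + t⁻¹ = t ^ (-(E+1)) * (t ^ E + t) := by
  have h1 : t ^ (-(E+1)) * t ^ E = t⁻¹ := by
    rw [← zpow_add₀ ht, show -(E+1) + E = -1 by ring, zpow_neg_one]
  have h2 : t ^ (-(E+1)) * t = t ^ (-E) := by
    rw [show -(E+1) = -E + (-1) by ring, zpow_add₀ ht, zpow_neg_one, mul_assoc,
      inv_mul_cancel₀ ht, mul_one]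
  rw [mul_add, h1, h2, inv_zpow', add_comm]

private lemma prod_flip (ht : t ≠ 0) {α : Type*} (s : Finset α) (f g : α → K) (k : α → ℤ)
    (h : ∀ c ∈ s, f c = -(t ^ k c) * g c) :
    ∏ c ∈ s, f c = (-1) ^ s.card * t ^ (∑ c ∈ s, k c) * ∏ c ∈ s, g c := by
  rw [Finset.prod_congr rfl h]
  calc ∏ c ∈ s, (-(t ^ k c) * g c) = ∏ c ∈ s, ((-1) * (t ^ k c * g c)) := by
        refine Finset.prod_congr rfl fun c _ => by ring
    _ = (-1) ^ s.card * ∏ c ∈ s, (t ^ k c * g c) := by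
        rw [Finset.prod_mul_distrib, Finset.prod_const]
    _ = (-1) ^ s.card * t ^ (∑ c ∈ s, k c) * ∏ c ∈ s, g c := by
        rw [Finset.prod_mul_distrib, ← zpow_sum'' ht, mul_assoc]

private lemma sum_two_range (k : ℕ) : ∑ i ∈ Finset.range k, 2*(i+1) = k*(k+1) := by
  induction k with
  | zero => simp
  | succ k ih => rw [Finset.sum_range_succ, ih]; ring

end Helpers

private lemma sum_arm' (Y : YoungDiagram) :
    ∑ c ∈ Y.cells, (Y.rowLen c.1 - c.2 - 1) = ∑ c ∈ Y.cells, c.2 := by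
  refine Finset.sum_nbij' (fun c => (c.1, Y.rowLen c.1 - 1 - c.2))
    (fun c => (c.1, Y.rowLen c.1 - 1 - c.2)) ?_ ?_ ?_ ?_ ?_ <;>
    (rintro ⟨i, j⟩ hc;
     simp only [YoungDiagram.mem_cells, YoungDiagram.mem_iff_lt_rowLen] at hc;
     (try simp only [YoungDiagram.mem_cells, YoungDiagram.mem_iff_lt_rowLen,
        Prod.mk.injEq, true_and]);
     omega)

private lemma sum_leg' (Y : YoungDiagram) :
    ∑ c ∈ Y.cells, (Y.colLen c.2 - c.1 - 1) = ∑ c ∈ Y.cells, c.1 := by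
  refine Finset.sum_nbij' (fun c => (Y.colLen c.2 - 1 - c.1, c.2))
    (fun c => (Y.colLen c.2 - 1 - c.1, c.2)) ?_ ?_ ?_ ?_ ?_ <;>
    (rintro ⟨i, j⟩ hc;
     simp only [YoungDiagram.mem_cells, YoungDiagram.mem_iff_lt_colLen] at hc;
     (try simp only [YoungDiagram.mem_cells, YoungDiagram.mem_iff_lt_colLen,
        Prod.mk.injEq, and_true]);
     omega)

private lemma sum_hook' (Y : YoungDiagram) :
    ∑ c ∈ Y.cells, Y.hookLen c = (∑ c ∈ Y.cells, c.1) + (∑ c ∈ Y.cells, c.2) + Y.card := by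
  have h1 : ∑ c ∈ Y.cells, Y.hookLen c
      = ∑ c ∈ Y.cells, ((Y.colLen c.2 - c.1 - 1) + ((Y.rowLen c.1 - c.2 - 1) + 1)) := by
    refine Finset.sum_congr rfl ?_
    rintro ⟨i, j⟩ hc
    have h2 : j < Y.rowLen i := by
      rw [← YoungDiagram.mem_iff_lt_rowLen]; exact (YoungDiagram.mem_cells _).1 hc
    have h3 : i < Y.colLen j := by
      rw [← YoungDiagram.mem_iff_lt_colLen]; exact (YoungDiagram.mem_cells _).1 hc
    simp only [YoungDiagram.hookLen]
    omega
  rw [h1, Finset.sum_add_distrib, Finset.sum_add_distrib, sum_leg' Y, sum_arm' Y,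
    Finset.sum_const, smul_eq_mul, mul_one, YoungDiagram.card]
  ring

/-- **Palindromicity of type `D_n` spin fake degrees (`n` odd)**: for a partition `λ` of
an odd `n`, `Q(λ,t) = t^{n(n-1)} Q(λ, 1/t)` as rational functions of `t` (stated for every
nonzero `t` in any field at which the denominators do not vanish). -/
theorem spinFakeDegD_palindromic (K : Type*) [Field K] (Y : YoungDiagram) (n : ℕ)
    (hodd : Odd n) (hn : Y.card = n) (t : K) (ht : t ≠ 0)
    (hden : ∀ c ∈ Y.cells, (1 : K) - t ^ (2 * Y.hookLen c) ≠ 0) :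
    spinFakeDegD K Y n t = t ^ (n * (n - 1)) * spinFakeDegD K Y n t⁻¹ := by
  have hn1 : 1 ≤ n := hodd.pos
  set N := Y.nStat with hN
  set S : ℤ := ∑ c ∈ Y.cells,
    (-(2 * ((c.2 : ℤ) - (c.1 : ℤ)) + 1) + ((2 * Y.hookLen c : ℕ) : ℤ)) with hSdef
  -- flip the first cell product
  have hA : ∏ c ∈ Y.cells,
        (1 + t⁻¹ ^ (2 * ((c.2 : ℤ) - (c.1 : ℤ)) + 1)) / (1 - t⁻¹ ^ (2 * Y.hookLen c))
      = (-1) ^ Y.cells.card * t ^ S *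
        ∏ c ∈ Y.cells,
          (1 + t ^ (2 * ((c.2 : ℤ) - (c.1 : ℤ)) + 1)) / (1 - t ^ (2 * Y.hookLen c)) := by
    exact prod_flip ht _ _ _ _ fun c _ => frac_flip ht _ _ _ _ (numA_flip ht _)
  -- flip the second cell product
  have hB : ∏ c ∈ Y.cells,
        (t⁻¹ ^ (2 * ((c.2 : ℤ) - (c.1 : ℤ))) + t⁻¹) / (1 - t⁻¹ ^ (2 * Y.hookLen c))
      = (-1) ^ Y.cells.card * t ^ S *
        ∏ c ∈ Y.cells,
          (t ^ (2 * ((c.2 : ℤ) - (c.1 : ℤ))) + t) / (1 - t ^ (2 * Y.hookLen c)) := by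
    exact prod_flip ht _ _ _ _ fun c _ => frac_flip ht _ _ _ _ (numB_flip ht _)
  -- flip the range product
  have hP : ∏ i ∈ Finset.range (n - 1), (1 - t⁻¹ ^ (2 * (i + 1)))
      = (-1) ^ (n - 1) * t ^ (∑ i ∈ Finset.range (n - 1), (-((2 * (i + 1) : ℕ) : ℤ))) *
        ∏ i ∈ Finset.range (n - 1), (1 - t ^ (2 * (i + 1))) := by
    have := prod_flip ht (Finset.range (n - 1))
      (fun i => 1 - t⁻¹ ^ (2 * (i + 1))) (fun i => 1 - t ^ (2 * (i + 1)))
      (fun i => -((2 * (i + 1) : ℕ) : ℤ))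
      (fun i _ => by
        show (1:K) - t⁻¹ ^ (2 * (i + 1))
          = -t ^ (-((2 * (i + 1) : ℕ) : ℤ)) * (1 - t ^ (2 * (i + 1)))
        rw [one_sub_inv_pow ht, zpow_neg, zpow_natCast])
    simpa using this
  have hPsum : ∑ i ∈ Finset.range (n - 1), (-((2 * (i + 1) : ℕ) : ℤ))
      = -(((n - 1) * n : ℕ) : ℤ) := by
    rw [Finset.sum_neg_distrib, ← Nat.cast_sum, sum_two_range,
      show n - 1 + 1 = n by omega]
  have hPar : ((-1 : K)) ^ (n - 1) = 1 := (Nat.Odd.sub_odd hodd odd_one).neg_one_pow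
  have hcard : ((-1 : K)) ^ Y.cells.card = -1 := by
    rw [show Y.cells.card = n from hn]; exact hodd.neg_one_pow
  have hD : (1 : K) - t⁻¹ ^ n = -(t ^ n)⁻¹ * (1 - t ^ n) := one_sub_inv_pow ht n
  have hT : t⁻¹ ^ (2 * N) = (t ^ (2 * N))⁻¹ := by rw [inv_pow]
  -- the exponent computation
  have hSval : S = 4 * (N : ℤ) + n := by
    have e1 : ∀ c ∈ Y.cells,
        (-(2 * ((c.2 : ℤ) - (c.1 : ℤ)) + 1) + ((2 * Y.hookLen c : ℕ) : ℤ))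
        = (2 * (Y.hookLen c : ℤ) + 2 * (c.1 : ℤ)) - (2 * (c.2 : ℤ) + 1) := by
      intro c _; push_cast; ring
    have h2 := sum_hook' Y
    rw [hSdef, Finset.sum_congr rfl e1, Finset.sum_sub_distrib, Finset.sum_add_distrib,
      Finset.sum_add_distrib, ← Finset.mul_sum, ← Finset.mul_sum, ← Finset.mul_sum,
      Finset.sum_const, ← Nat.cast_sum, ← Nat.cast_sum, ← Nat.cast_sum, h2]
    rw [show Y.cells.card = n from hn, hn] at *
    rw [hN, YoungDiagram.nStat]
    push_cast
    ring
  have hpow : t ^ (n * (n - 1)) * ((t ^ (2 * N))⁻¹ * (t ^ S *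
      ((t ^ ((n - 1) * n))⁻¹ * (t ^ n)⁻¹))) = t ^ (2 * N) := by
    rw [← zpow_natCast t (n * (n - 1)), ← zpow_natCast t (2 * N),
      ← zpow_natCast t ((n - 1) * n), ← zpow_natCast t n,
      ← zpow_neg, ← zpow_neg, ← zpow_neg,
      ← zpow_add₀ ht, ← zpow_add₀ ht, ← zpow_add₀ ht, ← zpow_add₀ ht]
    congr 1
    rw [hSval]
    push_cast [Nat.cast_sub hn1]
    ring
  rw [spinFakeDegD, spinFakeDegD, hA, hB, hP, hPsum, hPar, hcard, hD, hT,
    zpow_neg, zpow_natCast]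
  linear_combination
    -(((∏ c ∈ Y.cells,
        (1 + t ^ (2 * ((c.2 : ℤ) - (c.1 : ℤ)) + 1)) / (1 - t ^ (2 * Y.hookLen c))) +
      (∏ c ∈ Y.cells,
        (t ^ (2 * ((c.2 : ℤ) - (c.1 : ℤ))) + t) / (1 - t ^ (2 * Y.hookLen c)))) *
      (∏ i ∈ Finset.range (n - 1), (1 - t ^ (2 * (i + 1)))) * (1 - t ^ n)) * hpow
end

section
/- Let Cl_n be the Clifford algebra (c_i²=1, anticommuting) and set β_i = (c_i - c_{i+1})/√2 for 1 ≤ i ≤ n-1 and β_n = c_n. Then the elements β_1,…,β_n satisfy the type B_n spin relations: β_i² = 1 for all i; β_i β_{i+1} β_i = β_{i+1} β_i β_{i+1} for i ≤ n-2; (β_i β_j)² = -1 for |i-j| > 1; and (β_{n-1} β_n)⁴ = -1. -/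
section Helpers
set_option linter.unusedSectionVars false
variable {A : Type*} [Ring A] [Algebra ℂ A]

lemma swap_aux {x y : A} (h : x * y = -(y * x)) (z : A) :
    x * (y * z) = -(y * (x * z)) := by
  rw [← mul_assoc, h, neg_mul, mul_assoc]

lemma sq_aux {x : A} (h : x * x = 1) (z : A) : x * (x * z) = z := by
  rw [← mul_assoc, h, one_mul]

lemma flip_anti {x y : A} (h : x * y = -(y * x)) : y * x = -(x * y) := by
  rw [h, neg_neg]

lemma diff_sq (a b : A) (ha : a * a = 1) (hb : b * b = 1)
    (hab : a * b = -(b * a)) : (a - b) * (a - b) = (2 : ℂ) • (1 : A) := by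
  have h1 : (a - b) * (a - b) = a*a - a*b - b*a + b*b := by noncomm_ring
  rw [h1, ha, hb, hab]
  simp
  norm_num [two_smul]

lemma braid_raw (a b d : A) (ha : a*a = 1) (hb : b*b = 1) (hd : d*d = 1)
    (hab : a*b = -(b*a)) (had : a*d = -(d*a)) (hbd : b*d = -(d*b)) :
    (a - b) * ((b - d) * (a - b)) = (b - d) * ((a - b) * (b - d)) := by
  have hba := flip_anti hab
  have hda := flip_anti had
  have hdb := flip_anti hbd
  simp only [sub_mul, mul_sub, mul_neg, neg_mul, neg_neg, mul_one, one_mul,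
    mul_assoc, swap_aux hba, swap_aux hda, swap_aux hdb, sq_aux ha, sq_aux hb, sq_aux hd,
    hba, hda, hdb, ha, hb, hd]
  abel

lemma anti_mul {x y : A} (hx : x * x = 1) (hy : y * y = 1)
    (hxy : x * y = -(y * x)) : (x * y) ^ 2 = -1 := by
  have h1 : (x*y)^2 = x*(y*x)*y := by rw [pow_two]; noncomm_ring
  rw [h1, flip_anti hxy]
  calc x * -(x*y) * y = -(x*x*(y*y)) := by noncomm_ring
  _ = -1 := by rw [hx, hy, mul_one]

lemma anti_sub_right (u w z : A) (huw : u*w = -(w*u)) (huz : u*z = -(z*u)) :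
    u * (w - z) = -((w - z) * u) := by
  rw [mul_sub, sub_mul, huw, huz]; abel

lemma anti_sub_left (u v w : A) (huw : u*w = -(w*u)) (hvw : v*w = -(w*v)) :
    (u - v) * w = -(w * (u - v)) := by
  rw [sub_mul, mul_sub, huw, hvw]; abel

lemma anti_sub_sub (u v w z : A) (huw : u*w = -(w*u)) (huz : u*z = -(z*u))
    (hvw : v*w = -(w*v)) (hvz : v*z = -(z*v)) :
    (u - v) * (w - z) = -((w - z) * (u - v)) := by
  have h1 : (u - v) * (w - z) = u*w - u*z - v*w + v*z := by noncomm_ring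
  have h2 : -((w - z) * (u - v)) = -(w*u) + (z*u) + (w*v) - (z*v) := by noncomm_ring
  rw [h1, h2, huw, huz, hvw, hvz]; abel

lemma four_smul_one : ((4 : ℂ) • (1 : A)) = 4 := by
  rw [← Algebra.algebraMap_eq_smul_one, map_ofNat]

lemma quad_raw (a b : A) (ha : a*a = 1) (hb : b*b = 1) (hab : a*b = -(b*a)) :
    ((a - b) * b) ^ 4 = (-4 : ℂ) • (1 : A) := by
  have hu : (a - b) * b = a*b - 1 := by rw [sub_mul, hb]
  have habab : (a*b)*(a*b) = -1 := by
    have h1 : (a*b)*(a*b) = a*(b*a)*b := by noncomm_ring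
    rw [h1, flip_anti hab]
    calc a * -(a*b) * b = -(a*a*(b*b)) := by noncomm_ring
    _ = -1 := by rw [ha, hb, mul_one]
  have hu2 : ((a - b) * b)^2 = -(2 * (a*b)) := by
    rw [pow_two, hu]
    have h2 : (a*b - 1) * (a*b - 1) = (a*b)*(a*b) - 2*(a*b) + 1 := by noncomm_ring
    rw [h2, habab]; abel
  have h3 : ((a - b) * b)^4 = (((a - b) * b)^2)^2 := by rw [← pow_mul]
  rw [h3, hu2]
  have h4 : (-(2 * (a*b)))^2 = 4 * ((a*b)*(a*b)) := by noncomm_ring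
  rw [h4, habab, neg_smul, four_smul_one]
  simp

end Helpers

/-- Let `Cl_n` be the complex Clifford algebra with generators `c_1, …, c_n` (`c_i² = 1`,
anticommuting; formalized as any complex algebra with elements satisfying these
relations), and set `β_i = (c_i - c_{i+1})/√2` for `1 ≤ i ≤ n-1` and `β_n = c_n`.
Then the `β_i` satisfy the type `B_n` spin relations: `β_i² = 1` for all `i`;
`β_i β_{i+1} β_i = β_{i+1} β_i β_{i+1}` for `i ≤ n-2`; `(β_i β_j)² = -1` for `|i-j| > 1`;
and `(β_{n-1} β_n)⁴ = -1`.  (Indices are 0-based: the generators are `β 0, …, β (n-1)`,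
with `β (n-1) = c_n`.) -/
theorem spin_type_B_relations {A : Type*} [Ring A] [Algebra ℂ A]
    (n : ℕ) (hn : 2 ≤ n) (c : Fin n → A)
    (hsq : ∀ i, c i ^ 2 = 1)
    (hanti : ∀ i j, i ≠ j → c i * c j = -(c j * c i))
    (β : ℕ → A)
    (hβ : ∀ (i : ℕ) (h : i + 1 < n),
      β i = ((Real.sqrt 2 : ℂ))⁻¹ • (c ⟨i, by omega⟩ - c ⟨i + 1, h⟩))
    (hβlast : β (n - 1) = c ⟨n - 1, by omega⟩) :
    (∀ i : ℕ, i < n → β i ^ 2 = 1) ∧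
    (∀ i : ℕ, i + 3 ≤ n → β i * β (i + 1) * β i = β (i + 1) * β i * β (i + 1)) ∧
    (∀ i j : ℕ, i < n → j < n → (i + 1 < j ∨ j + 1 < i) → (β i * β j) ^ 2 = -1) ∧
    (β (n - 2) * β (n - 1)) ^ 4 = -1 := by
  set s : ℂ := ((Real.sqrt 2 : ℂ))⁻¹ with hs
  have hmul : ∀ i, c i * c i = 1 := fun i => by rw [← pow_two]; exact hsq i
  have hA : ∀ i j : Fin n, (i : ℕ) ≠ (j : ℕ) → c i * c j = -(c j * c i) :=
    fun i j h => hanti i j (Fin.ne_of_val_ne h)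
  have hss : s * s = (2 : ℂ)⁻¹ := by
    rw [hs, ← mul_inv, ← Complex.ofReal_mul, Real.mul_self_sqrt (by norm_num)]
    norm_num
  have part1 : ∀ i : ℕ, i < n → β i ^ 2 = 1 := by
    intro i hi
    by_cases h1 : i + 1 < n
    · rw [hβ i h1, pow_two, smul_mul_assoc, mul_smul_comm, smul_smul,
        diff_sq _ _ (hmul _) (hmul _) (hA _ _ (by simp)), smul_smul]
      rw [hss]
      norm_num
    · rw [show i = n - 1 by omega, hβlast]
      exact hsq _
  refine ⟨part1, ?_, ?_, ?_⟩
  · intro i h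
    have h1 : i + 1 < n := by omega
    have h2 : i + 1 + 1 < n := by omega
    rw [hβ i h1, hβ (i + 1) h2]
    simp only [smul_mul_assoc, mul_smul_comm, smul_smul, mul_assoc]
    exact congrArg _ (braid_raw _ _ _ (hmul _) (hmul _) (hmul _)
      (hA _ _ (by simp)) (hA _ _ (by simp; omega)) (hA _ _ (by simp)))
  · intro i j hi hj hij
    have hx : β i * β i = 1 := by rw [← pow_two]; exact part1 i hi
    have hy : β j * β j = 1 := by rw [← pow_two]; exact part1 j hj
    refine anti_mul hx hy ?_
    by_cases h1 : i + 1 < n <;> by_cases h2 : j + 1 < n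
    · rw [hβ i h1, hβ j h2]
      simp only [smul_mul_assoc, mul_smul_comm, smul_smul]
      rw [anti_sub_sub _ _ _ _ (hA _ _ (by simp; omega)) (hA _ _ (by simp; omega))
        (hA _ _ (by simp; omega)) (hA _ _ (by simp; omega)), smul_neg]
    · rw [hβ i h1, show j = n - 1 by omega, hβlast]
      simp only [smul_mul_assoc, mul_smul_comm]
      rw [anti_sub_left _ _ _ (hA _ _ (by simp; omega)) (hA _ _ (by simp; omega)), smul_neg]
    · rw [hβ j h2, show i = n - 1 by omega, hβlast]
      simp only [smul_mul_assoc, mul_smul_comm]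
      rw [anti_sub_right _ _ _ (hA _ _ (by simp; omega)) (hA _ _ (by simp; omega)), smul_neg]
    · omega
  · have h1 : n - 2 + 1 < n := by omega
    have hfin : (⟨n - 2 + 1, h1⟩ : Fin n) = ⟨n - 1, by omega⟩ := Fin.mk_eq_mk.mpr (by omega)
    rw [hβ (n - 2) h1, hβlast, hfin]
    simp only [smul_mul_assoc, smul_pow]
    rw [quad_raw _ _ (hmul _) (hmul _) (hA _ _ (by simp; omega)), smul_smul]
    have : s ^ 4 * (-4 : ℂ) = -1 := by
      rw [show s ^ 4 = (s * s) * (s * s) by ring, hss]; norm_num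
    rw [this, neg_smul, one_smul]
end
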